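/- The cycle C_n (n ≥ 3) is a square if and only if n is even. -/

import Mathlib

open SimpleGraph

/-- Butterfly involution data: `φ` is an involutive automorphism of `G`, with nonempty
fixed set and nonempty non-fixed set, the common-neighbor condition, and a partition
`A0 ∪ A1` of the non-fixed vertices with no crossing edges, swapped by `φ`. -/
def ButterflyData {V : Type*} (G : SimpleGraph V) (phi : G ≃g G) (A0 A1 : Set V) : Prop :=
  Function.Involutive phi ∧
  (∃ v, phi v = v) ∧ (∃ v, phi v ≠ v) ∧
  (∀ u : V, phi u ≠ u →
    G.neighborSet u ∩ G.neighborSet (phi u) = G.neighborSet u ∩ {v | phi v = v}) ∧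
  A0 ∪ A1 = {v | phi v ≠ v} ∧ Disjoint A0 A1 ∧
  (∀ a ∈ A0, ∀ b ∈ A1, ¬ G.Adj a b) ∧
  (∀ a ∈ A0, phi a ∈ A1) ∧ (∀ a ∈ A1, phi a ∈ A0)

/-- A graph is a square (in the gluing algebra) iff it admits a butterfly involution. -/
def IsSquareGraph {V : Type*} (G : SimpleGraph V) : Prop :=
  ∃ (phi : G ≃g G) (A0 A1 : Set V), ButterflyData G phi A0 A1

open Fin.CommRing

lemma mod_small {a n : ℕ} (h : a < 2*n) : a % n = a ∨ (a % n = a - n ∧ n ≤ a) := by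
  rcases Nat.lt_or_ge a n with h' | h'
  · exact Or.inl (Nat.mod_eq_of_lt h')
  · right
    rw [Nat.mod_eq_sub_mod h', Nat.mod_eq_of_lt (by omega)]
    exact ⟨rfl, h'⟩

/-- In Fin n with n odd, doubling is injective. -/
lemma fin_double_inj {n : ℕ} [NeZero n] (hodd : Odd n) {x y : Fin n}
    (h : x + x = y + y) : x = y := by
  have hd : (x - y) + (x - y) = 0 := by linear_combination h
  have hv := congrArg Fin.val hd
  rw [Fin.val_add, Fin.val_zero] at hv
  have hlt := (x - y).isLt
  rcases mod_small (a := (x-y).val + (x-y).val) (n := n) (by omega) with h2 | ⟨h2, h3⟩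
  · have : (x - y).val = 0 := by omega
    have : x - y = 0 := Fin.ext (by simpa using this)
    linear_combination this
  · exfalso
    rcases hodd with ⟨k, hk⟩
    omega

lemma two_ne_zero_fin {m : ℕ} (hodd : Odd (m + 2)) : (2 : Fin (m+2)) ≠ 0 := by
  intro h
  have : (1 : Fin (m+2)) = 0 := fin_double_inj hodd (by linear_combination h)
  simp [Fin.ext_iff] at this

/-- Classification of automorphisms of the cycle graph with n odd. -/
lemma cycle_aut_linear {m : ℕ} (hodd : Odd (m + 2))
    (phi : cycleGraph (m+2) ≃g cycleGraph (m+2)) :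
    ∃ ε : Fin (m+2), (ε = 1 ∨ ε = -1) ∧ ∀ x, phi x = phi 0 + ε * x := by
  have hadj : ∀ u v : Fin (m+2), (cycleGraph (m+2)).Adj u v ↔ u - v = 1 ∨ v - u = 1 :=
    fun u v => cycleGraph_adj
  have hstep : ∀ u : Fin (m+2), (cycleGraph (m+2)).Adj (u + 1) u := by
    intro u
    rw [hadj]
    left; ring
  obtain ⟨ε, hεdef, hεval⟩ : ∃ ε : Fin (m+2), phi 1 = phi 0 + ε ∧ (ε = 1 ∨ ε = -1) := by
    refine ⟨phi 1 - phi 0, by ring, ?_⟩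
    have h01 : (cycleGraph (m+2)).Adj (phi 1) (phi 0) := by
      rw [phi.map_adj_iff]
      simpa using hstep 0
    rw [hadj] at h01
    rcases h01 with h | h
    · exact Or.inl h
    · right; linear_combination -h
  have key : ∀ k : ℕ, phi (↑k + 1) = phi ↑k + ε := by
    intro k
    induction k with
    | zero => simpa using hεdef
    | succ k ih =>
      have hadj2 : (cycleGraph (m+2)).Adj (phi (↑(k+1) + 1)) (phi ↑(k+1)) := by
        rw [phi.map_adj_iff]; exact hstep _
      rw [hadj] at hadj2
      have ihk : phi ↑(k+1) = phi ↑k + ε := by push_cast at ih ⊢; exact ih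
      have hne : phi (↑(k+1) + 1) ≠ phi ↑k := by
        intro h
        have h2 := phi.injective h
        push_cast at h2
        exact two_ne_zero_fin hodd (by linear_combination h2)
      rcases hεval with he | he <;> subst he <;> rcases hadj2 with h | h
      · linear_combination h
      · exact absurd (by linear_combination -h + ihk) hne
      · exact absurd (by linear_combination h + ihk) hne
      · linear_combination -h
  have key2 : ∀ k : ℕ, phi ↑k = phi 0 + ε * ↑k := by
    intro k
    induction k with
    | zero => simp
    | succ k ih =>
      have h1 := key k
      push_cast
      rw [show ((k:Fin (m+2)) + 1) = ↑k + 1 from rfl, h1, ih]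
      ring
  exact ⟨ε, hεval, fun x => by rw [← Fin.cast_val_eq_self x, key2]⟩

lemma forward_dir {m : ℕ} (hodd : Odd (m+2))
    (phi : cycleGraph (m+2) ≃g cycleGraph (m+2)) (A0 A1 : Set (Fin (m+2)))
    (hinv : Function.Involutive phi)
    (hfix : ∃ v, phi v = v) (hnfix : ∃ v, phi v ≠ v)
    (hpart : A0 ∪ A1 = {v | phi v ≠ v}) (hdisj : Disjoint A0 A1)
    (hnoedge : ∀ a ∈ A0, ∀ b ∈ A1, ¬ (cycleGraph (m+2)).Adj a b)
    (h01 : ∀ a ∈ A0, phi a ∈ A1) (h10 : ∀ a ∈ A1, phi a ∈ A0) : False := by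
  obtain ⟨ε, hεval, hlin⟩ := cycle_aut_linear hodd phi
  obtain ⟨v, hv⟩ := hfix
  obtain ⟨w, hw⟩ := hnfix
  rcases hεval with he | he
  · -- rotation: phi = translation, involutive ⟹ identity ⟹ contradiction with hw
    subst he
    apply hw
    have h0 : phi 0 = 0 := by
      have hv2 := hv
      rw [hlin v] at hv2
      linear_combination hv2
    rw [hlin w, h0]
    ring
  · -- reflection
    subst he
    have hlin' : ∀ x, phi x = phi 0 - x := by
      intro x; rw [hlin x]; ring
    have ha : phi 0 = v + v := by
      have := hv; rw [hlin' v] at this; linear_combination this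
    -- fixed points are exactly v
    have hfixiff : ∀ x : Fin (m+2), phi x = x ↔ x = v := by
      intro x
      constructor
      · intro h
        rw [hlin' x, ha] at h
        exact fin_double_inj hodd (by linear_combination -h)
      · intro h; subst h; exact hv
    -- same-class lemma
    have hsame : ∀ x y : Fin (m+2), x ≠ v → y ≠ v → (cycleGraph (m+2)).Adj x y →
        (x ∈ A0 ↔ y ∈ A0) := by
      intro x y hx hy hxy
      have hxm : x ∈ A0 ∪ A1 := by rw [hpart]; exact fun h => hx ((hfixiff x).mp h)
      have hym : y ∈ A0 ∪ A1 := by rw [hpart]; exact fun h => hy ((hfixiff y).mp h)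
      constructor
      · intro hx0
        rcases hym with hy0 | hy1
        · exact hy0
        · exact absurd hxy (hnoedge x hx0 y hy1)
      · intro hy0
        rcases hxm with hx0 | hx1
        · exact hx0
        · exact absurd hxy.symm (hnoedge y hy0 x hx1)
    -- chain: all non-fixed vertices in same class as v+1
    have hchain : ∀ k : ℕ, 1 ≤ k → k ≤ m + 1 → ((v + ↑k ∈ A0) ↔ (v + 1 ∈ A0)) := by
      intro k hk1 hk2
      induction k with
      | zero => omega
      | succ k ih =>
        rcases Nat.eq_or_lt_of_le hk1 with h1 | h1
        · rw [← h1]; push_cast; rfl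
        · have hk1' : 1 ≤ k := by omega
          have hk2' : k ≤ m + 1 := by omega
          have hne1 : v + ↑(k+1) ≠ v := by
            intro h
            have : ((k+1 : ℕ) : Fin (m+2)) = 0 := by linear_combination h
            have := congrArg Fin.val this
            rw [Fin.val_cast_of_lt (by omega), Fin.val_zero] at this
            omega
          have hne2 : v + ↑k ≠ v := by
            intro h
            have : ((k : ℕ) : Fin (m+2)) = 0 := by linear_combination h
            have := congrArg Fin.val this
            rw [Fin.val_cast_of_lt (by omega), Fin.val_zero] at this
            omega
          have hadjk : (cycleGraph (m+2)).Adj (v + ↑(k+1)) (v + ↑k) := by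
            rw [cycleGraph_adj]
            left; push_cast; ring
          rw [hsame _ _ hne1 hne2 hadjk]
          exact ih hk1' hk2'
    have hall : ∀ x : Fin (m+2), x ≠ v → (x ∈ A0 ↔ v + 1 ∈ A0) := by
      intro x hx
      have hd : x - v ≠ 0 := fun h => hx (by linear_combination h)
      have hval1 : 1 ≤ (x - v).val := by
        rcases Nat.eq_zero_or_pos (x - v).val with h | h
        · exact absurd (Fin.ext (by simpa using h)) hd
        · exact h
      have hx' : x = v + ↑((x - v).val) := by
        rw [Fin.cast_val_eq_self]; ring
      rw [hx']
      exact hchain _ hval1 (by have := (x - v).isLt; omega)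
    -- now derive contradiction
    have hu : v + 1 ≠ v := by
      intro h
      have : (1 : Fin (m+2)) = 0 := by linear_combination h
      simp [Fin.ext_iff] at this
    have hphiu : phi (v + 1) = v - 1 := by rw [hlin' _, ha]; ring
    have hw' : v - 1 ≠ v := by
      intro h
      have : (1 : Fin (m+2)) = 0 := by linear_combination -h
      simp [Fin.ext_iff] at this
    have humem : v + 1 ∈ A0 ∪ A1 := by
      rw [hpart]; exact fun h => hu ((hfixiff _).mp h)
    rcases humem with hu0 | hu1
    · have hv1A1 : v - 1 ∈ A1 := hphiu ▸ h01 _ hu0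
      have hv1A0 : v - 1 ∈ A0 := (hall _ hw').mpr hu0
      exact Set.disjoint_left.mp hdisj hv1A0 hv1A1
    · have hA0 : phi (v + 1) ∈ A0 := h10 _ hu1
      rw [hphiu] at hA0
      have : v + 1 ∈ A0 := (hall _ hw').mp hA0
      exact Set.disjoint_left.mp hdisj this hu1

def negIso (m : ℕ) : cycleGraph (m+2) ≃g cycleGraph (m+2) where
  toEquiv := Equiv.neg (Fin (m+2))
  map_rel_iff' := by
    intro a b
    show (cycleGraph (m+2)).Adj (-a) (-b) ↔ (cycleGraph (m+2)).Adj a b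
    rw [cycleGraph_adj, cycleGraph_adj,
      show -a - -b = b - a by ring, show -b - -a = a - b by ring, or_comm]

lemma backward_dir {m : ℕ} (hm : 1 ≤ m) (heven : Even (m+2)) :
    ∃ (phi : cycleGraph (m+2) ≃g cycleGraph (m+2)) (A0 A1 : Set (Fin (m+2))),
      Function.Involutive phi ∧
      (∃ v, phi v = v) ∧ (∃ v, phi v ≠ v) ∧
      (∀ u : Fin (m+2), phi u ≠ u →
        (cycleGraph (m+2)).neighborSet u ∩ (cycleGraph (m+2)).neighborSet (phi u)
          = (cycleGraph (m+2)).neighborSet u ∩ {v | phi v = v}) ∧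
      A0 ∪ A1 = {v | phi v ≠ v} ∧ Disjoint A0 A1 ∧
      (∀ a ∈ A0, ∀ b ∈ A1, ¬ (cycleGraph (m+2)).Adj a b) ∧
      (∀ a ∈ A0, phi a ∈ A1) ∧ (∀ a ∈ A1, phi a ∈ A0) := by
  obtain ⟨k, hk⟩ := heven
  have hk2 : 2 ≤ k := by omega
  have hneg : ∀ x : Fin (m+2), (negIso m) x = -x := fun _ => rfl
  refine ⟨negIso m, {x | 0 < x.val ∧ x.val < k}, {x | k < x.val}, ?_, ?_, ?_, ?_, ?_, ?_, ?_, ?_, ?_⟩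
  · exact fun x => neg_neg x
  · exact ⟨0, neg_zero⟩
  · refine ⟨1, fun h => ?_⟩
    rw [hneg] at h
    have h2 := congrArg Fin.val h
    have h3 : (-(1:Fin (m+2))).val = ((m+2) - (1:Fin (m+2)).val) % (m+2) := by rw [Fin.neg_def]
    simp only [Fin.val_one] at h2 h3
    rw [h3, Nat.mod_eq_of_lt (by omega)] at h2
    omega
  · -- neighbor condition
    intro u hu
    have hu' : -u ≠ u := hu
    have hset : ∀ x : Fin (m+2), ((negIso m) x = x) ↔ -x = x := fun x => Iff.rfl
    show (cycleGraph (m+2)).neighborSet u ∩ (cycleGraph (m+2)).neighborSet (-u) = _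
    ext w
    simp only [Set.mem_inter_iff, Set.mem_setOf_eq, hset]
    rw [show (cycleGraph (m+2)).neighborSet u = {u - 1, u + 1} from cycleGraph_neighborSet,
        show (cycleGraph (m+2)).neighborSet (-u) = {-u - 1, -u + 1} from cycleGraph_neighborSet]
    simp only [Set.mem_insert_iff, Set.mem_singleton_iff]
    constructor
    · rintro ⟨h1 | h1, h2 | h2⟩
      · exfalso; apply hu'; subst h1; linear_combination -h2
      · refine ⟨Or.inl h1, ?_⟩; subst h1; linear_combination -h2
      · refine ⟨Or.inr h1, ?_⟩; subst h1; linear_combination -h2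
      · exfalso; apply hu'; subst h1; linear_combination -h2
    · rintro ⟨h1 | h1, h2⟩
      · exact ⟨Or.inl h1, Or.inr (by subst h1; linear_combination -h2)⟩
      · exact ⟨Or.inr h1, Or.inl (by subst h1; linear_combination -h2)⟩
  · -- union
    ext x
    have : ((negIso m) x ≠ x) ↔ ¬(-x = x) := Iff.rfl
    simp only [Set.mem_union, Set.mem_setOf_eq, this]
    have hfix : -x = x ↔ (x.val = 0 ∨ x.val = k) := by
      rw [neg_eq_iff_add_eq_zero]
      constructor
      · intro h
        have := congrArg Fin.val h
        rw [Fin.val_add, Fin.val_zero] at this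
        have hlt := x.isLt
        rcases mod_small (a := x.val + x.val) (n := m+2) (by omega) with h2 | ⟨h2, h3⟩ <;> omega
      · rintro (h | h)
        · have : x = 0 := Fin.ext (by simpa using h)
          rw [this]; ring
        · apply Fin.ext
          rw [Fin.val_add, Fin.val_zero, h]
          have : k + k = m+2 := by omega
          rw [this, Nat.mod_self]
    rw [hfix]
    have := x.isLt
    constructor
    · rintro (⟨h1, h2⟩ | h1) <;> omega
    · intro h; omega
  · -- disjoint
    rw [Set.disjoint_left]
    rintro x ⟨h1, h2⟩ h3
    simp only [Set.mem_setOf_eq] at h3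
    omega
  · -- no edges
    rintro a ⟨ha1, ha2⟩ b hb hadj
    simp only [Set.mem_setOf_eq] at hb
    rw [cycleGraph_adj'] at hadj
    have hda : (a - b).val = (((m+2) - b.val) + a.val) % (m+2) := by rw [Fin.sub_def]
    have hdb : (b - a).val = (((m+2) - a.val) + b.val) % (m+2) := by rw [Fin.sub_def]
    have hla := a.isLt
    have hlb := b.isLt
    rcases mod_small (a := ((m+2) - b.val) + a.val) (n := m+2) (by omega) with h2 | ⟨h2, h3⟩ <;>
      rcases mod_small (a := ((m+2) - a.val) + b.val) (n := m+2) (by omega) with h4 | ⟨h4, h5⟩ <;>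
      rcases hadj with h | h <;> omega
  · -- A0 to A1
    rintro a ⟨ha1, ha2⟩
    show k < (-a).val
    have hva : (-a).val = ((m+2) - a.val) % (m+2) := by rw [Fin.neg_def]
    have := a.isLt
    rw [Nat.mod_eq_of_lt (by omega)] at hva
    omega
  · -- A1 to A0
    rintro a ha
    simp only [Set.mem_setOf_eq] at ha
    show 0 < (-a).val ∧ (-a).val < k
    have hva : (-a).val = ((m+2) - a.val) % (m+2) := by rw [Fin.neg_def]
    have := a.isLt
    rw [Nat.mod_eq_of_lt (by omega)] at hva
    omega

theorem stmt5 (n : ℕ) (hn : 3 ≤ n) :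
    IsSquareGraph (SimpleGraph.cycleGraph n) ↔ Even n := by
  obtain ⟨m, rfl⟩ : ∃ m, n = m + 2 := ⟨n - 2, by omega⟩
  constructor
  · rintro ⟨phi, A0, A1, hbd⟩
    obtain ⟨hinv, hfix, hnfix, hnbr, hpart, hdisj, hnoedge, h01, h10⟩ := hbd
    by_contra hodd
    have hodd2 : Odd (m + 2) := by
      rcases Nat.even_or_odd (m+2) with h | h
      · exact absurd h hodd
      · exact h
    exact forward_dir hodd2 phi A0 A1 hinv hfix hnfix hpart hdisj hnoedge h01 h10
  · intro heven
    obtain ⟨phi, A0, A1, h⟩ := backward_dir (by omega) heven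
    exact ⟨phi, A0, A1, h⟩
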